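/- Let r : ℝ → ℂ be a Schwartz function and X, Y > 0. Suppose for every nonnegative integer j there is a constant C_j ≥ 0 with |r^{(j)}(x)| ≤ C_j Y^{-j} (1 + |x|/X)^{-2} for all x. Then for every nonnegative integer j, the Fourier transform satisfies |r̂(y)| ≪_j X (1 + |y| Y)^{-j} for all real y. -/

import Mathlib

open MeasureTheory Real Filter

lemma aux_integrable : Integrable (fun x : ℝ => ((1 + |x|) ^ 2)⁻¹) := by
  apply integrable_inv_one_add_sq.mono'
  · exact (((continuous_const.add _root_.continuous_abs).pow 2).inv₀
      (fun x : ℝ => by simp only [Pi.pow_apply, Pi.add_apply]; positivity)).aestronglyMeasurable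
  · filter_upwards with x
    rw [Real.norm_eq_abs, _root_.abs_of_nonneg (by positivity)]
    apply inv_anti₀ (by positivity)
    nlinarith [abs_nonneg x, sq_abs x]

lemma aux_integral : (∫ x : ℝ, ((1 + |x|) ^ 2)⁻¹) = 2 := by
  rw [integral_comp_abs (f := fun x => ((1 + x) ^ 2)⁻¹)]
  have h : (∫ x in Set.Ioi (0:ℝ), ((1 + x) ^ 2)⁻¹) = 0 - (-(1 + (0:ℝ))⁻¹) := by
    apply integral_Ioi_of_hasDerivAt_of_nonneg' (g := fun x => -(1 + x)⁻¹)
    · intro x hx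
      have h1 : (1:ℝ) + x ≠ 0 := by simp only [Set.mem_Ici] at hx; nlinarith
      have := (((hasDerivAt_id x).const_add 1).inv h1).neg
      refine this.congr_deriv ?_
      simp only [id_eq, neg_div, neg_neg, one_div]
    · intro x _; positivity
    · have : Tendsto (fun x : ℝ => (1 + x)⁻¹) atTop (nhds 0) :=
        tendsto_inv_atTop_zero.comp (tendsto_atTop_add_const_left _ _ tendsto_id)
      simpa using this.neg
  rw [h]; norm_num

lemma aux_integrable_X {X : ℝ} (hX : 0 < X) :
    Integrable (fun x : ℝ => ((1 + |x| / X) ^ 2)⁻¹) := by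
  have he : (fun x : ℝ => ((1 + |x| / X) ^ 2)⁻¹)
      = fun x : ℝ => ((1 + |x / X|) ^ 2)⁻¹ := by
    funext x; rw [abs_div, abs_of_pos hX]
  rw [he]
  exact aux_integrable.comp_div hX.ne'

lemma aux_integral_X {X : ℝ} (hX : 0 < X) :
    (∫ x : ℝ, ((1 + |x| / X) ^ 2)⁻¹) = 2 * X := by
  have he : (fun x : ℝ => ((1 + |x| / X) ^ 2)⁻¹)
      = fun x : ℝ => ((1 + |x / X|) ^ 2)⁻¹ := by
    funext x; rw [abs_div, abs_of_pos hX]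
  rw [he, MeasureTheory.Measure.integral_comp_div (fun u : ℝ => ((1 + |u|) ^ 2)⁻¹) X,
    aux_integral, abs_of_pos hX, smul_eq_mul]
  ring

lemma aux_fourier_bound (g : ℝ → ℂ) {B : ℝ → ℝ} (hB : Integrable B)
    (h : ∀ x, ‖g x‖ ≤ B x) (y : ℝ) :
    ‖FourierTransform.fourier g y‖ ≤ ∫ x, B x := by
  refine (VectorFourier.norm_fourierIntegral_le_integral_norm _ _ _ _ _).trans ?_
  exact integral_mono_of_nonneg (Filter.Eventually.of_forall fun x => norm_nonneg _) hB
    (Filter.Eventually.of_forall h)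

lemma aux_pow (t : ℝ) (ht : 0 ≤ t) (j : ℕ) : (1 + t) ^ j ≤ 2 ^ j * (1 + t ^ j) := by
  calc (1 + t) ^ j ≤ (2 * max 1 t) ^ j := by
        apply pow_le_pow_left₀ (by positivity)
        have := le_max_left 1 t; have := le_max_right 1 t; linarith
    _ = 2 ^ j * (max 1 t) ^ j := mul_pow _ _ _
    _ ≤ 2 ^ j * (1 + t ^ j) := by
        gcongr 2 ^ j * ?_ <;> [skip]
        rcases max_cases 1 t with ⟨h, _⟩ | ⟨h, _⟩ <;> rw [h]
        · simp; positivity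
        · nlinarith [pow_nonneg ht j]

theorem stmt_3 (C : ℕ → ℝ) (hC : ∀ j, 0 ≤ C j) (j : ℕ) :
    ∃ D : ℝ, ∀ (X Y : ℝ), 0 < X → 0 < Y → ∀ r : SchwartzMap ℝ ℂ,
      (∀ k : ℕ, ∀ x : ℝ, ‖iteratedDeriv k (⇑r) x‖ ≤ C k * Y ^ (-(k : ℤ)) * ((1 + |x| / X) ^ 2)⁻¹) →
      ∀ y : ℝ, ‖FourierTransform.fourier (⇑r : ℝ → ℂ) y‖ ≤ D * X * ((1 + |y| * Y) ^ j)⁻¹ := by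
  refine ⟨2 ^ j * (2 * C 0 + 2 * C j), fun X Y hX hY r hr y => ?_⟩
  have hr' : ∀ k : ℕ, ∀ x : ℝ,
      ‖iteratedDeriv k (⇑r) x‖ ≤ C k * (Y ^ k)⁻¹ * ((1 + |x| / X) ^ 2)⁻¹ := by
    intro k x
    have := hr k x
    rwa [zpow_neg, zpow_natCast] at this
  have key : ∀ k : ℕ, ∀ y : ℝ,
      ‖FourierTransform.fourier (iteratedDeriv k (⇑r)) y‖ ≤ C k * (Y ^ k)⁻¹ * (2 * X) := by
    intro k y
    have hBint : Integrable (fun x : ℝ => C k * (Y ^ k)⁻¹ * ((1 + |x| / X) ^ 2)⁻¹) :=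
      (aux_integrable_X hX).const_mul _
    have := aux_fourier_bound (iteratedDeriv k (⇑r)) hBint (hr' k) y
    rwa [integral_const_mul, aux_integral_X hX] at this
  have hderint : ∀ n : ℕ, (n : ℕ∞) ≤ (⊤ : ℕ∞) → Integrable (iteratedDeriv n (⇑r)) := by
    intro n _
    apply Integrable.mono' (((aux_integrable_X hX).const_mul (C n * (Y ^ n)⁻¹)))
    · exact ((r.smooth ⊤).continuous_iteratedDeriv n (by exact_mod_cast (le_top : (n : ℕ∞) ≤ ⊤))).aestronglyMeasurable
    · exact Filter.Eventually.of_forall (hr' n)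
  have hrel := Real.fourier_iteratedDeriv (n := j) (r.smooth (⊤ : ℕ∞)) hderint le_top
  have h1 : ‖FourierTransform.fourier (⇑r) y‖ ≤ 2 * C 0 * X := by
    have := key 0 y
    rw [iteratedDeriv_zero] at this
    calc ‖FourierTransform.fourier (⇑r) y‖ ≤ C 0 * (Y ^ 0)⁻¹ * (2 * X) := this
      _ = 2 * C 0 * X := by norm_num; ring
  have h2 : (2 * π * |y|) ^ j * ‖FourierTransform.fourier (⇑r) y‖ ≤ C j * (Y ^ j)⁻¹ * (2 * X) := by
    have hk := key j y
    have he := congrFun hrel y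
    rw [he] at hk
    have hn : ‖((2 * π * Complex.I * (y : ℂ)) ^ j : ℂ)‖ = (2 * π * |y|) ^ j := by
      rw [norm_pow]
      congr 1
      simp only [norm_mul, Complex.norm_I, Complex.norm_real, Real.norm_eq_abs,
        Complex.norm_ofNat]
      rw [_root_.abs_of_pos Real.pi_pos]
      ring
    rwa [norm_smul, hn] at hk
  set F := ‖FourierTransform.fourier (⇑r) y‖ with hF
  have hFnn : 0 ≤ F := norm_nonneg _
  have h3 : (|y| * Y) ^ j * F ≤ 2 * C j * X := by
    have e2 : |y| ^ j * F ≤ (2 * π * |y|) ^ j * F := by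
      apply mul_le_mul_of_nonneg_right _ hFnn
      apply pow_le_pow_left₀ (abs_nonneg y)
      nlinarith [Real.pi_gt_three, abs_nonneg y]
    have hYj : (0:ℝ) < Y ^ j := pow_pos hY j
    calc (|y| * Y) ^ j * F = Y ^ j * (|y| ^ j * F) := by rw [mul_pow]; ring
      _ ≤ Y ^ j * ((2 * π * |y|) ^ j * F) := by
          exact mul_le_mul_of_nonneg_left e2 hYj.le
      _ ≤ Y ^ j * (C j * (Y ^ j)⁻¹ * (2 * X)) := mul_le_mul_of_nonneg_left h2 hYj.le
      _ = 2 * C j * X := by field_simp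
  have hP : (0:ℝ) < (1 + |y| * Y) ^ j := by positivity
  rw [← div_eq_mul_inv, le_div_iff₀ hP]
  have hp := aux_pow (|y| * Y) (by positivity) j
  calc F * (1 + |y| * Y) ^ j ≤ F * (2 ^ j * (1 + (|y| * Y) ^ j)) :=
        mul_le_mul_of_nonneg_left hp hFnn
    _ = 2 ^ j * (F + (|y| * Y) ^ j * F) := by ring
    _ ≤ 2 ^ j * (2 * C 0 * X + 2 * C j * X) := by
        apply mul_le_mul_of_nonneg_left _ (by positivity)
        exact add_le_add h1 h3
    _ = 2 ^ j * (2 * C 0 + 2 * C j) * X := by ring
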